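/- For n ≥ 4, the hypercube Q_n, realized as the Cayley graph of H = (Z/2)^n with standard basis generators a_1,…,a_n, contains two edge-disjoint Hamiltonian cycles C_1 and C_2 such that C_1 contains the edge (0, a_n) and C_2 contains the edge (a_n, a_{n-1}+a_n). -/

import Mathlib

/-- The Cayley graph of an additive group `G` with connection set `S`. -/
def cayleyGraph (G : Type*) [AddGroup G] (S : Set G) : SimpleGraph G :=
  SimpleGraph.fromRel (fun g h => h - g ∈ S)

/-- The hypercube `Q_n`, realized as the Cayley graph of `(ℤ/2)^n` with the
standard basis vectors as connection set. -/
def cubeCayley (n : ℕ) : SimpleGraph (Fin n → ZMod 2) :=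
  cayleyGraph (Fin n → ZMod 2) {s | ∃ i : Fin n, s = Pi.single i 1}

namespace EDHC

abbrev V (n : ℕ) := Fin n → ZMod 2

lemma z2_add_self (a : ZMod 2) : a + a = 0 := by revert a; decide

lemma addSelf {n : ℕ} (x : V n) : x + x = 0 := funext fun i => z2_add_self (x i)

lemma neg_eq {n : ℕ} (x : V n) : -x = x := by
  rw [neg_eq_iff_add_eq_zero, addSelf]

lemma sub_eq_add {n : ℕ} (x y : V n) : x - y = x + y := by
  rw [sub_eq_add_neg, neg_eq]

lemma adj_iff {n : ℕ} {x y : V n} :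
    (cubeCayley n).Adj x y ↔ x ≠ y ∧ ∃ i : Fin n, x + y = Pi.single i 1 := by
  show (SimpleGraph.fromRel _).Adj x y ↔ _
  rw [SimpleGraph.fromRel_adj]
  constructor
  · rintro ⟨hne, h | h⟩
    · exact ⟨hne, by rwa [sub_eq_add, add_comm] at h⟩
    · exact ⟨hne, by rwa [sub_eq_add] at h⟩
  · rintro ⟨hne, i, h⟩
    refine ⟨hne, Or.inl ?_⟩
    show y - x ∈ _
    rw [sub_eq_add, add_comm]
    exact ⟨i, h⟩

lemma single_ne_zero {n : ℕ} (i : Fin n) : (Pi.single i 1 : V n) ≠ 0 := by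
  intro h
  have := congrFun h i
  rw [Pi.single_eq_same] at this
  exact one_ne_zero this

lemma adj_of {n : ℕ} {x y : V n} (i : Fin n) (h : x + y = Pi.single i 1) :
    (cubeCayley n).Adj x y := by
  rw [adj_iff]
  refine ⟨fun hxy => ?_, i, h⟩
  rw [hxy, addSelf] at h
  exact single_ne_zero i h.symm

lemma adj_symm {n : ℕ} {x y : V n} (h : (cubeCayley n).Adj x y) : (cubeCayley n).Adj y x :=
  h.symm

lemma adj_translate {n : ℕ} {x y : V n} (t : V n) (h : (cubeCayley n).Adj x y) :
    (cubeCayley n).Adj (x + t) (y + t) := by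
  rw [adj_iff] at h
  obtain ⟨-, i, hi⟩ := h
  refine adj_of i ?_
  calc x + t + (y + t) = x + y + (t + t) := by ring
  _ = Pi.single i 1 := by rw [addSelf, add_zero, hi]

instance cubeAdjDecidable (n : ℕ) : DecidableRel (cubeCayley n).Adj := fun x y =>
  decidable_of_iff _ adj_iff.symm

end EDHC

namespace EDHC

lemma snoc_add {n : ℕ} (x y : V n) (b c : ZMod 2) :
    (Fin.snoc x b : V (n+1)) + Fin.snoc y c = Fin.snoc (x + y) (b + c) := by
  funext m
  refine Fin.lastCases ?_ (fun m => ?_) m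
  · simp [Fin.snoc_last]
  · simp [Fin.snoc_castSucc]

lemma snoc_inj {n : ℕ} {x y : V n} {b c : ZMod 2}
    (h : (Fin.snoc x b : V (n+1)) = Fin.snoc y c) : x = y ∧ b = c := by
  constructor
  · funext m
    have := congrFun h (Fin.castSucc m)
    simpa [Fin.snoc_castSucc] using this
  · have := congrFun h (Fin.last n)
    simpa [Fin.snoc_last] using this

lemma single_castSucc {n : ℕ} (i : Fin n) :
    (Pi.single (Fin.castSucc i) 1 : V (n+1)) = Fin.snoc (Pi.single i 1) 0 := by
  funext m
  refine Fin.lastCases ?_ (fun m => ?_) m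
  · rw [Fin.snoc_last, Pi.single_eq_of_ne]
    exact fun h => (Fin.castSucc_lt_last i).ne' h
  · rw [Fin.snoc_castSucc]
    rcases eq_or_ne m i with rfl | hm
    · rw [Pi.single_eq_same, Pi.single_eq_same]
    · rw [Pi.single_eq_of_ne (by simpa using hm), Pi.single_eq_of_ne hm]

lemma single_last (n : ℕ) :
    (Pi.single (Fin.last n) 1 : V (n+1)) = Fin.snoc (0 : V n) 1 := by
  funext m
  refine Fin.lastCases ?_ (fun m => ?_) m
  · rw [Fin.snoc_last, Pi.single_eq_same]
  · rw [Fin.snoc_castSucc, Pi.single_eq_of_ne (Fin.castSucc_lt_last m).ne]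
    rfl

/-- The inductive invariant: two edge-disjoint Hamiltonian cycles (as bijective
cycle functions) of `Q_n`, where `C₁` passes through `aⱼ, 0, aᵢ` consecutively and
`C₂` passes through `aⱼ, aⱼ+aᵢ, aᵢ` consecutively. -/
def Good (n : ℕ) (i j : Fin n) : Prop :=
  ∃ f g : ZMod (2^n) → V n,
    Function.Bijective f ∧ Function.Bijective g ∧
    (∀ k, (cubeCayley n).Adj (f k) (f (k+1))) ∧
    (∀ k, (cubeCayley n).Adj (g k) (g (k+1))) ∧
    (∀ k l, s(f k, f (k+1)) ≠ s(g l, g (l+1))) ∧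
    f 0 = Pi.single j 1 ∧ f 1 = 0 ∧ f 2 = Pi.single i 1 ∧
    g 0 = Pi.single j 1 ∧ g 1 = Pi.single j 1 + Pi.single i 1 ∧ g 2 = Pi.single i 1

def bits4 (v : ℕ) : V 4 :=
  ![((v % 2 : ℕ) : ZMod 2), ((v / 2 % 2 : ℕ) : ZMod 2),
    ((v / 4 % 2 : ℕ) : ZMod 2), ((v / 8 % 2 : ℕ) : ZMod 2)]

def f4 : ZMod 16 → V 4 := fun k =>
  bits4 ([8, 0, 4, 5, 1, 3, 2, 6, 7, 15, 11, 9, 13, 12, 14, 10].getD k.val 0)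

def g4 : ZMod 16 → V 4 := fun k =>
  bits4 ([8, 12, 4, 6, 14, 15, 13, 5, 7, 3, 11, 10, 2, 0, 1, 9].getD k.val 0)

set_option maxRecDepth 4000 in
lemma good4 : Good 4 2 3 :=
  ⟨f4, g4, by decide, by decide, by decide, by decide, by decide,
    by decide, by decide, by decide, by decide, by decide, by decide⟩

end EDHC
namespace EDHC

lemma snoc_zero (n : ℕ) : (Fin.snoc (0 : V n) (0 : ZMod 2) : V (n+1)) = 0 := by
  funext m
  refine Fin.lastCases ?_ (fun m => ?_) m
  · rw [Fin.snoc_last]; rfl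
  · rw [Fin.snoc_castSucc]; rfl

lemma adj_snoc_layer {n : ℕ} {x y : V n} (c : ZMod 2) (h : (cubeCayley n).Adj x y) :
    (cubeCayley (n+1)).Adj (Fin.snoc x c) (Fin.snoc y c) := by
  rw [adj_iff] at h
  obtain ⟨-, i, hi⟩ := h
  refine adj_of (Fin.castSucc i) ?_
  rw [snoc_add, hi, z2_add_self, single_castSucc]

lemma adj_snoc_cross {n : ℕ} (x : V n) {b c : ZMod 2} (h : b + c = 1) :
    (cubeCayley (n+1)).Adj (Fin.snoc x b) (Fin.snoc x c) := by
  refine adj_of (Fin.last n) ?_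
  rw [snoc_add, addSelf, h, single_last]

lemma sym2_snoc_cases {n : ℕ} {x y x' y' : V n} {b c b' c' : ZMod 2}
    (h : s((Fin.snoc x b : V (n+1)), Fin.snoc y c) = s((Fin.snoc x' b' : V (n+1)), Fin.snoc y' c')) :
    (x = x' ∧ b = b' ∧ y = y' ∧ c = c') ∨ (x = y' ∧ b = c' ∧ y = x' ∧ c = b') := by
  rw [Sym2.eq_iff] at h
  rcases h with ⟨h1, h2⟩ | ⟨h1, h2⟩
  · obtain ⟨e1, e2⟩ := snoc_inj h1
    obtain ⟨e3, e4⟩ := snoc_inj h2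
    exact Or.inl ⟨e1, e2, e3, e4⟩
  · obtain ⟨e1, e2⟩ := snoc_inj h1
    obtain ⟨e3, e4⟩ := snoc_inj h2
    exact Or.inr ⟨e1, e2, e3, e4⟩

lemma lt_two_cases {m : ℕ} (h : m < 2) : m = 0 ∨ m = 1 := by omega

lemma window_inj {N c v v' : ℕ} (hc : c ≤ N) (hv : v < 2 * N) (hv' : v' < 2 * N)
    (hmod : v % N = v' % N)
    (hbr : (c ≤ v ∧ v < c + N) ↔ (c ≤ v' ∧ v' < c + N)) : v = v' := by
  have h0 : 0 < N := by omega
  have e1 : v % N + N * (v / N) = v := Nat.mod_add_div v N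
  have e2 : v' % N + N * (v' / N) = v' := Nat.mod_add_div v' N
  have l1 : v / N < 2 := Nat.div_lt_of_lt_mul (by omega)
  have l2 : v' / N < 2 := Nat.div_lt_of_lt_mul (by omega)
  have m1 : v % N < N := Nat.mod_lt _ h0
  have m2 : v' % N < N := Nat.mod_lt _ h0
  have q1 : v / N = 0 ∨ v / N = 1 := lt_two_cases l1
  have q2 : v' / N = 0 ∨ v' / N = 1 := lt_two_cases l2
  rcases q1 with q1 | q1 <;> rcases q2 with q2 | q2 <;> rw [q1] at e1 <;> rw [q2] at e2 <;>
    simp only [Nat.mul_zero, Nat.mul_one] at e1 e2 <;> omega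

/-- The canonical projection `ZMod 2^(n+1) → ZMod 2^n`. -/
def stepφ (n : ℕ) : ZMod (2^(n+1)) →+* ZMod (2^n) :=
  ZMod.castHom (pow_dvd_pow 2 (Nat.le_succ n)) (ZMod (2^n))

/-- The doubled first Hamiltonian cycle. -/
def stepF {n : ℕ} (i : Fin n) (f : ZMod (2^n) → V n) : ZMod (2^(n+1)) → V (n+1) := fun k =>
  if 1 ≤ k.val ∧ k.val ≤ 2^n then Fin.snoc (f (2 - stepφ n k)) 0
  else Fin.snoc (f (2 - stepφ n k) + Pi.single i 1) 1

/-- The doubled second Hamiltonian cycle. -/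
def stepG {n : ℕ} (i : Fin n) (g : ZMod (2^n) → V n) : ZMod (2^(n+1)) → V (n+1) := fun k =>
  if 2 ≤ k.val ∧ k.val ≤ 2^n + 1 then Fin.snoc (g (2 - stepφ n k)) 0
  else Fin.snoc (g (2 - stepφ n k) + Pi.single i 1) 1

lemma good_step {n : ℕ} (hn : 2 ≤ n) (i j : Fin n) (hij : i ≠ j) (h : Good n i j) :
    Good (n+1) (Fin.castSucc j) (Fin.last n) := by
  classical
  obtain ⟨f, g, hfb, hgb, hfa, hga, hdisj, hf0, hf1, hf2, hg0, hg1, hg2⟩ := h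
  haveI hNN : NeZero (2^n) := ⟨pow_ne_zero _ two_ne_zero⟩
  haveI hNM : NeZero (2^(n+1)) := ⟨pow_ne_zero _ two_ne_zero⟩
  have hM2N : 2^(n+1) = 2 * 2^n := by ring
  have hN4 : 4 ≤ 2^n := by
    calc (4:ℕ) = 2^2 := by norm_num
    _ ≤ 2^n := Nat.pow_le_pow_right (by norm_num) hn
  have hM8 : 8 ≤ 2^(n+1) := by omega
  set φ := stepφ n
  set a : V n := Pi.single i 1 with hadef
  -- value facts
  have hval_self : ∀ k : ZMod (2^(n+1)), ((k.val : ℕ) : ZMod (2^(n+1))) = k := fun k =>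
    ZMod.natCast_rightInverse k
  have hφval : ∀ k : ZMod (2^(n+1)), φ k = ((k.val : ℕ) : ZMod (2^n)) := fun k => by
    conv_lhs => rw [← hval_self k]
    rw [map_natCast]
  have hsucc_val : ∀ k : ZMod (2^(n+1)), (k + 1).val = (k.val + 1) % 2^(n+1) := fun k => by
    have hh : k + 1 = ((k.val + 1 : ℕ) : ZMod (2^(n+1))) := by
      rw [Nat.cast_add, hval_self k, Nat.cast_one]
    rw [hh, ZMod.val_natCast]
  have hval_of_lt : ∀ v : ℕ, v < 2^(n+1) → ((v : ℕ) : ZMod (2^(n+1))).val = v := fun v hv => by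
    rw [ZMod.val_natCast, Nat.mod_eq_of_lt hv]
  have h1val : (1 : ZMod (2^(n+1))).val = 1 := by
    rw [show (1 : ZMod (2^(n+1))) = ((1:ℕ) : ZMod (2^(n+1))) by norm_cast]
    exact hval_of_lt 1 (by omega)
  have h2val : (2 : ZMod (2^(n+1))).val = 2 := by
    rw [show (2 : ZMod (2^(n+1))) = ((2:ℕ) : ZMod (2^(n+1))) by norm_cast]
    exact hval_of_lt 2 (by omega)
  -- arithmetic facts in V n
  have hfa2 : f 2 + a = 0 := by rw [hf2, hadef, addSelf]
  have hfa1 : f 1 + a = a := by rw [hf1, zero_add]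
  have hga2 : g 2 + a = 0 := by rw [hg2, hadef, addSelf]
  have hga1 : g 1 + a = Pi.single j 1 := by
    rw [hg1, hadef, add_assoc, addSelf, add_zero]
  have hga0 : g 0 + a = Pi.single j 1 + Pi.single i 1 := by rw [hg0, hadef]
  -- base distinctness
  have hsj_i : (Pi.single j 1 : V n) i = 0 := Pi.single_eq_of_ne hij 1
  have hsi_j : (Pi.single i 1 : V n) j = 0 := Pi.single_eq_of_ne (Ne.symm hij) 1
  have hd1 : (0 : V n) ≠ Pi.single j 1 := fun h => single_ne_zero j h.symm
  have hd2 : (0 : V n) ≠ Pi.single j 1 + Pi.single i 1 := fun h => by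
    have h' := congrFun h i
    simp only [Pi.add_apply, hsj_i, Pi.single_eq_same, zero_add, Pi.zero_apply] at h'
    exact one_ne_zero h'.symm
  have hd3 : a ≠ Pi.single j 1 := fun h => by
    have h' := congrFun h i
    rw [hadef, Pi.single_eq_same, hsj_i] at h'
    exact one_ne_zero h'
  have hd4 : a ≠ Pi.single j 1 + Pi.single i 1 := fun h => by
    have h' := congrFun h j
    rw [hadef] at h'
    simp only [Pi.add_apply, hsi_j, Pi.single_eq_same, add_zero] at h'
    exact one_ne_zero h'.symm
  -- branch evaluation
  have hF_in : ∀ k : ZMod (2^(n+1)), 1 ≤ k.val → k.val ≤ 2^n →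
      stepF i f k = Fin.snoc (f (2 - φ k)) 0 :=
    fun k h1 h2 => by rw [stepF, if_pos ⟨h1, h2⟩]
  have hF_out : ∀ k : ZMod (2^(n+1)), ¬(1 ≤ k.val ∧ k.val ≤ 2^n) →
      stepF i f k = Fin.snoc (f (2 - φ k) + a) 1 :=
    fun k h1 => by rw [stepF, if_neg h1, hadef]
  have hG_in : ∀ k : ZMod (2^(n+1)), 2 ≤ k.val → k.val ≤ 2^n + 1 →
      stepG i g k = Fin.snoc (g (2 - φ k)) 0 :=
    fun k h1 h2 => by rw [stepG, if_pos ⟨h1, h2⟩]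
  have hG_out : ∀ k : ZMod (2^(n+1)), ¬(2 ≤ k.val ∧ k.val ≤ 2^n + 1) →
      stepG i g k = Fin.snoc (g (2 - φ k) + a) 1 :=
    fun k h1 => by rw [stepG, if_neg h1, hadef]
  -- edge shapes for F
  have hF_edge : ∀ k : ZMod (2^(n+1)),
      (∃ m, stepF i f k = Fin.snoc (f (m+1)) 0 ∧ stepF i f (k+1) = Fin.snoc (f m) 0) ∨
      (∃ m, stepF i f k = Fin.snoc (f (m+1) + a) 1 ∧ stepF i f (k+1) = Fin.snoc (f m + a) 1) ∨
      (stepF i f k = Fin.snoc (0 : V n) 1 ∧ stepF i f (k+1) = Fin.snoc (0 : V n) 0) ∨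
      (stepF i f k = Fin.snoc a 0 ∧ stepF i f (k+1) = Fin.snoc a 1) := by
    intro k
    have hv := ZMod.val_lt k
    have hc : k.val = 0 ∨ (1 ≤ k.val ∧ k.val ≤ 2^n - 1) ∨ k.val = 2^n ∨
        (2^n + 1 ≤ k.val ∧ k.val ≤ 2^(n+1) - 1) := by omega
    rcases hc with h0 | ⟨ha1, ha2⟩ | hN | ⟨hb1, hb2⟩
    · have hk : k = 0 := by rw [← hval_self k, h0, Nat.cast_zero]
      subst hk
      refine Or.inr (Or.inr (Or.inl ⟨?_, ?_⟩))
      · rw [hF_out 0 (by rw [ZMod.val_zero]; omega), map_zero, sub_zero, hfa2]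
      · rw [zero_add, hF_in 1 (by rw [h1val]) (by rw [h1val]; omega), map_one,
          show (2 - 1 : ZMod (2^n)) = 1 by ring, hf1]
    · refine Or.inl ⟨1 - φ k, ?_, ?_⟩
      · rw [hF_in k ha1 (by omega), show (1 - φ k + 1 : ZMod (2^n)) = 2 - φ k by ring]
      · have hsv : (k+1).val = k.val + 1 := by
          rw [hsucc_val, Nat.mod_eq_of_lt (by omega)]
        rw [hF_in (k+1) (by omega) (by rw [hsv]; omega), map_add, map_one,
          show (2 - (φ k + 1) : ZMod (2^n)) = 1 - φ k by ring]
    · have hφk : φ k = 0 := by rw [hφval, hN, ZMod.natCast_self]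
      refine Or.inr (Or.inr (Or.inr ⟨?_, ?_⟩))
      · rw [hF_in k (by omega) (by omega), hφk, sub_zero, hf2, hadef]
      · have hsv : (k+1).val = 2^n + 1 := by
          rw [hsucc_val, hN, Nat.mod_eq_of_lt (by omega)]
        rw [hF_out (k+1) (by rw [hsv]; omega), map_add, map_one, hφk, zero_add,
          show (2 - 1 : ZMod (2^n)) = 1 by ring, hfa1]
    · refine Or.inr (Or.inl ⟨1 - φ k, ?_, ?_⟩)
      · rw [hF_out k (by omega), show (1 - φ k + 1 : ZMod (2^n)) = 2 - φ k by ring]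
      · have hout : ¬(1 ≤ (k+1).val ∧ (k+1).val ≤ 2^n) := by
          rcases eq_or_lt_of_le (show k.val + 1 ≤ 2^(n+1) by omega) with he | hlt
          · rw [hsucc_val, he, Nat.mod_self]; omega
          · rw [hsucc_val, Nat.mod_eq_of_lt hlt]; omega
        rw [hF_out (k+1) hout, map_add, map_one,
          show (2 - (φ k + 1) : ZMod (2^n)) = 1 - φ k by ring]
  -- edge shapes for G
  have hG_edge : ∀ k : ZMod (2^(n+1)),
      (∃ m, stepG i g k = Fin.snoc (g (m+1)) 0 ∧ stepG i g (k+1) = Fin.snoc (g m) 0) ∨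
      (∃ m, stepG i g k = Fin.snoc (g (m+1) + a) 1 ∧ stepG i g (k+1) = Fin.snoc (g m + a) 1) ∨
      (stepG i g k = Fin.snoc (Pi.single j 1) 1 ∧
        stepG i g (k+1) = Fin.snoc (Pi.single j 1) 0) ∨
      (stepG i g k = Fin.snoc (Pi.single j 1 + Pi.single i 1) 0 ∧
        stepG i g (k+1) = Fin.snoc (Pi.single j 1 + Pi.single i 1) 1) := by
    intro k
    have hv := ZMod.val_lt k
    have hc : k.val = 0 ∨ k.val = 1 ∨ (2 ≤ k.val ∧ k.val ≤ 2^n) ∨ k.val = 2^n + 1 ∨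
        (2^n + 2 ≤ k.val ∧ k.val ≤ 2^(n+1) - 1) := by omega
    rcases hc with h0 | h1 | ⟨ha1, ha2⟩ | hN1 | ⟨hb1, hb2⟩
    · have hk : k = 0 := by rw [← hval_self k, h0, Nat.cast_zero]
      subst hk
      refine Or.inr (Or.inl ⟨1, ?_, ?_⟩)
      · rw [hG_out 0 (by rw [ZMod.val_zero]; omega), map_zero, sub_zero,
          show (1 + 1 : ZMod (2^n)) = 2 by norm_num]
      · rw [zero_add, hG_out 1 (by rw [h1val]; omega), map_one,
          show (2 - 1 : ZMod (2^n)) = 1 by ring]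
    · have hk : k = 1 := by rw [← hval_self k, h1, Nat.cast_one]
      subst hk
      refine Or.inr (Or.inr (Or.inl ⟨?_, ?_⟩))
      · rw [hG_out 1 (by rw [h1val]; omega), map_one,
          show (2 - 1 : ZMod (2^n)) = 1 by ring, hga1]
      · rw [show ((1:ZMod (2^(n+1))) + 1) = 2 by norm_num,
          hG_in 2 (by rw [h2val]) (by rw [h2val]; omega), map_ofNat,
          show (2 - 2 : ZMod (2^n)) = 0 by ring, hg0]
    · refine Or.inl ⟨1 - φ k, ?_, ?_⟩
      · rw [hG_in k ha1 (by omega), show (1 - φ k + 1 : ZMod (2^n)) = 2 - φ k by ring]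
      · have hsv : (k+1).val = k.val + 1 := by
          rw [hsucc_val, Nat.mod_eq_of_lt (by omega)]
        rw [hG_in (k+1) (by omega) (by rw [hsv]; omega), map_add, map_one,
          show (2 - (φ k + 1) : ZMod (2^n)) = 1 - φ k by ring]
    · have hφk : φ k = 1 := by
        rw [hφval, hN1, Nat.cast_add, Nat.cast_one, ZMod.natCast_self, zero_add]
      refine Or.inr (Or.inr (Or.inr ⟨?_, ?_⟩))
      · rw [hG_in k (by omega) (by omega), hφk,
          show (2 - 1 : ZMod (2^n)) = 1 by ring, hg1]
      · have hsv : (k+1).val = 2^n + 2 := by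
          rw [hsucc_val, hN1, Nat.mod_eq_of_lt (by omega)]
        rw [hG_out (k+1) (by rw [hsv]; omega), map_add, map_one, hφk,
          show (2 - (1 + 1) : ZMod (2^n)) = 0 by ring, hga0]
    · refine Or.inr (Or.inl ⟨1 - φ k, ?_, ?_⟩)
      · rw [hG_out k (by omega), show (1 - φ k + 1 : ZMod (2^n)) = 2 - φ k by ring]
      · have hout : ¬(2 ≤ (k+1).val ∧ (k+1).val ≤ 2^n + 1) := by
          rcases eq_or_lt_of_le (show k.val + 1 ≤ 2^(n+1) by omega) with he | hlt
          · rw [hsucc_val, he, Nat.mod_self]; omega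
          · rw [hsucc_val, Nat.mod_eq_of_lt hlt]; omega
        rw [hG_out (k+1) hout, map_add, map_one,
          show (2 - (φ k + 1) : ZMod (2^n)) = 1 - φ k by ring]
  -- adjacency
  have hFadj : ∀ k, (cubeCayley (n+1)).Adj (stepF i f k) (stepF i f (k+1)) := by
    intro k
    rcases hF_edge k with ⟨m, h1, h2⟩ | ⟨m, h1, h2⟩ | ⟨h1, h2⟩ | ⟨h1, h2⟩ <;> rw [h1, h2]
    · exact adj_snoc_layer 0 (hfa m).symm
    · exact adj_snoc_layer 1 (adj_translate a (hfa m).symm)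
    · exact adj_snoc_cross _ (by decide)
    · exact adj_snoc_cross _ (by decide)
  have hGadj : ∀ k, (cubeCayley (n+1)).Adj (stepG i g k) (stepG i g (k+1)) := by
    intro k
    rcases hG_edge k with ⟨m, h1, h2⟩ | ⟨m, h1, h2⟩ | ⟨h1, h2⟩ | ⟨h1, h2⟩ <;> rw [h1, h2]
    · exact adj_snoc_layer 0 (hga m).symm
    · exact adj_snoc_layer 1 (adj_translate a (hga m).symm)
    · exact adj_snoc_cross _ (by decide)
    · exact adj_snoc_cross _ (by decide)
  -- injectivity
  have hvalinj : ∀ k k' : ZMod (2^(n+1)), k.val = k'.val → k = k' := fun k k' h => by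
    rw [← hval_self k, ← hval_self k', h]
  have hφmod : ∀ k k' : ZMod (2^(n+1)), φ k = φ k' → k.val % 2^n = k'.val % 2^n :=
    fun k k' h => by
      rw [hφval, hφval, ZMod.natCast_eq_natCast_iff'] at h
      exact h
  have hFinj : Function.Injective (stepF i f) := by
    intro k k' heq
    have hv := ZMod.val_lt k
    have hv' := ZMod.val_lt k'
    by_cases bk : 1 ≤ k.val ∧ k.val ≤ 2^n <;> by_cases bk' : 1 ≤ k'.val ∧ k'.val ≤ 2^n
    · rw [hF_in k bk.1 bk.2, hF_in k' bk'.1 bk'.2] at heq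
      have e := hfb.1 (snoc_inj heq).1
      rw [sub_right_inj] at e
      exact hvalinj _ _ (window_inj (c := 1) (by omega) (by omega) (by omega) (hφmod _ _ e)
        (by constructor <;> intro <;> omega))
    · rw [hF_in k bk.1 bk.2, hF_out k' bk'] at heq
      exact absurd (snoc_inj heq).2 (by decide)
    · rw [hF_out k bk, hF_in k' bk'.1 bk'.2] at heq
      exact absurd (snoc_inj heq).2 (by decide)
    · rw [hF_out k bk, hF_out k' bk'] at heq
      have e := hfb.1 (add_right_cancel (snoc_inj heq).1)
      rw [sub_right_inj] at e
      exact hvalinj _ _ (window_inj (c := 1) (by omega) (by omega) (by omega) (hφmod _ _ e)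
        (by constructor <;> intro <;> omega))
  have hGinj : Function.Injective (stepG i g) := by
    intro k k' heq
    have hv := ZMod.val_lt k
    have hv' := ZMod.val_lt k'
    by_cases bk : 2 ≤ k.val ∧ k.val ≤ 2^n + 1 <;>
      by_cases bk' : 2 ≤ k'.val ∧ k'.val ≤ 2^n + 1
    · rw [hG_in k bk.1 bk.2, hG_in k' bk'.1 bk'.2] at heq
      have e := hgb.1 (snoc_inj heq).1
      rw [sub_right_inj] at e
      exact hvalinj _ _ (window_inj (c := 2) (by omega) (by omega) (by omega) (hφmod _ _ e)
        (by constructor <;> intro <;> omega))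
    · rw [hG_in k bk.1 bk.2, hG_out k' bk'] at heq
      exact absurd (snoc_inj heq).2 (by decide)
    · rw [hG_out k bk, hG_in k' bk'.1 bk'.2] at heq
      exact absurd (snoc_inj heq).2 (by decide)
    · rw [hG_out k bk, hG_out k' bk'] at heq
      have e := hgb.1 (add_right_cancel (snoc_inj heq).1)
      rw [sub_right_inj] at e
      exact hvalinj _ _ (window_inj (c := 2) (by omega) (by omega) (by omega) (hφmod _ _ e)
        (by constructor <;> intro <;> omega))
  have hcard : Fintype.card (ZMod (2^(n+1))) = Fintype.card (V (n+1)) := by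
    rw [ZMod.card, Fintype.card_fun, ZMod.card, Fintype.card_fin]
  have hFbij : Function.Bijective (stepF i f) :=
    (Fintype.bijective_iff_injective_and_card _).mpr ⟨hFinj, hcard⟩
  have hGbij : Function.Bijective (stepG i g) :=
    (Fintype.bijective_iff_injective_and_card _).mpr ⟨hGinj, hcard⟩
  -- edge disjointness
  have hDisj : ∀ k l : ZMod (2^(n+1)),
      s(stepF i f k, stepF i f (k+1)) ≠ s(stepG i g l, stepG i g (l+1)) := by
    intro k l heq
    rcases hF_edge k with ⟨m, h1, h2⟩ | ⟨m, h1, h2⟩ | ⟨h1, h2⟩ | ⟨h1, h2⟩ <;>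
      rcases hG_edge l with ⟨m', h3, h4⟩ | ⟨m', h3, h4⟩ | ⟨h3, h4⟩ | ⟨h3, h4⟩ <;>
      rw [h1, h2, h3, h4] at heq <;>
      rcases sym2_snoc_cases heq with ⟨e1, e2, e3, e4⟩ | ⟨e1, e2, e3, e4⟩ <;>
      first
      | exact absurd e2 (by decide)
      | exact absurd e4 (by decide)
      | exact hd1 e1.symm
      | exact hd1 e1
      | exact hd2 e1.symm
      | exact hd2 e1
      | exact hd3 e1
      | exact hd4 e1
      | exact hdisj m m' (Sym2.eq_iff.mpr (Or.inl ⟨e3, e1⟩))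
      | exact hdisj m m' (Sym2.eq_iff.mpr (Or.inr ⟨e3, e1⟩))
      | exact hdisj m m' (Sym2.eq_iff.mpr (Or.inl ⟨add_right_cancel e3, add_right_cancel e1⟩))
      | exact hdisj m m' (Sym2.eq_iff.mpr (Or.inr ⟨add_right_cancel e3, add_right_cancel e1⟩))
  -- the distinguished values
  have hF0 : stepF i f 0 = Pi.single (Fin.last n) 1 := by
    rw [hF_out 0 (by rw [ZMod.val_zero]; omega), map_zero, sub_zero, hfa2, single_last]
  have hF1 : stepF i f 1 = 0 := by
    rw [hF_in 1 (by rw [h1val]) (by rw [h1val]; omega), map_one,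
      show (2 - 1 : ZMod (2^n)) = 1 by ring, hf1, snoc_zero]
  have hF2 : stepF i f 2 = Pi.single (Fin.castSucc j) 1 := by
    rw [hF_in 2 (by rw [h2val]; omega) (by rw [h2val]; omega), map_ofNat,
      show (2 - 2 : ZMod (2^n)) = 0 by ring, hf0, single_castSucc]
  have hG0 : stepG i g 0 = Pi.single (Fin.last n) 1 := by
    rw [hG_out 0 (by rw [ZMod.val_zero]; omega), map_zero, sub_zero, hga2, single_last]
  have hG1 : stepG i g 1 = Pi.single (Fin.last n) 1 + Pi.single (Fin.castSucc j) 1 := by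
    rw [hG_out 1 (by rw [h1val]; omega), map_one,
      show (2 - 1 : ZMod (2^n)) = 1 by ring, hga1, single_last, single_castSucc, snoc_add,
      zero_add, add_zero]
  have hG2 : stepG i g 2 = Pi.single (Fin.castSucc j) 1 := by
    rw [hG_in 2 (by rw [h2val]) (by rw [h2val]; omega), map_ofNat,
      show (2 - 2 : ZMod (2^n)) = 0 by ring, hg0, single_castSucc]
  exact ⟨stepF i f, stepG i g, hFbij, hGbij, hFadj, hGadj, hDisj, hF0, hF1, hF2, hG0, hG1, hG2⟩

end EDHC

namespace EDHC

open SimpleGraph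

lemma succ_mod_inj {N j j' : ℕ} (hj : j < N) (hj' : j' < N)
    (h : (j+1) % N = (j'+1) % N) : j = j' := by
  rcases Nat.lt_or_ge (j+1) N with h1 | h1 <;> rcases Nat.lt_or_ge (j'+1) N with h2 | h2
  · rw [Nat.mod_eq_of_lt h1, Nat.mod_eq_of_lt h2] at h; omega
  · have e : j' + 1 = N := by omega
    rw [Nat.mod_eq_of_lt h1, e, Nat.mod_self] at h; omega
  · have e : j + 1 = N := by omega
    rw [e, Nat.mod_self, Nat.mod_eq_of_lt h2] at h; omega
  · omega

variable {W : Type*} (Gr : SimpleGraph W)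

/-- The walk `f (N-m), f (N-m+1), ..., f N` associated to a cycle function. -/
def cycWalk {N : ℕ} [NeZero N] (f : ZMod N → W)
    (ha : ∀ k, Gr.Adj (f k) (f (k+1))) : ∀ m : ℕ, m ≤ N → Gr.Walk (f ↑(N - m)) (f ↑N)
  | 0, _ => SimpleGraph.Walk.nil.copy (by rw [Nat.sub_zero]) rfl
  | (m+1), h =>
      SimpleGraph.Walk.cons
        (by
          have e : N - (m+1) + 1 = N - m := by omega
          rw [show ((N - m : ℕ) : ZMod N) = ((N - (m+1) : ℕ) : ZMod N) + 1 from by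
            rw [← e]; push_cast; ring]
          exact ha _)
        (cycWalk f ha m (by omega))

lemma cycWalk_support {N : ℕ} [NeZero N] (f : ZMod N → W)
    (ha : ∀ k, Gr.Adj (f k) (f (k+1))) (m : ℕ) (h : m ≤ N) :
    (cycWalk Gr f ha m h).support = (List.range (m+1)).map (fun j => f ↑(N - m + j)) := by
  induction m with
  | zero =>
      simp only [cycWalk, SimpleGraph.Walk.support_copy, SimpleGraph.Walk.support_nil,
        List.range_succ, List.range_zero, List.nil_append, List.map_cons, List.map_nil]
      norm_num
  | succ m ih =>
      rw [cycWalk, SimpleGraph.Walk.support_cons, ih (by omega)]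
      conv_rhs => rw [List.range_succ_eq_map, List.map_cons, List.map_map]
      refine congrArg₂ List.cons ?_ ?_
      · simp only [Nat.add_zero]
      · apply List.map_congr_left
        intro x hx
        simp only [Function.comp_apply]
        rw [show N - (m+1) + Nat.succ x = N - m + x from by omega]

lemma cycWalk_edges {N : ℕ} [NeZero N] (f : ZMod N → W)
    (ha : ∀ k, Gr.Adj (f k) (f (k+1))) (m : ℕ) (h : m ≤ N) :
    (cycWalk Gr f ha m h).edges =
      (List.range m).map (fun j => s(f ↑(N - m + j), f ↑(N - m + j + 1))) := by
  induction m with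
  | zero =>
      simp only [cycWalk, SimpleGraph.Walk.edges_copy, SimpleGraph.Walk.edges_nil,
        List.range_zero, List.map_nil]
  | succ m ih =>
      rw [cycWalk, SimpleGraph.Walk.edges_cons, ih (by omega)]
      conv_rhs => rw [List.range_succ_eq_map, List.map_cons, List.map_map]
      refine congrArg₂ List.cons ?_ ?_
      · simp only [Nat.add_zero]
        rw [show N - (m+1) + 1 = N - m from by omega]
      · apply List.map_congr_left
        intro x hx
        simp only [Function.comp_apply]
        rw [show N - (m+1) + Nat.succ x = N - m + x from by omega]

/-- Conversion of a bijective cycle function into a Hamiltonian cycle walk. -/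
lemma cyc_to_hamcycle [Fintype W] [DecidableEq W] {N : ℕ} (hN : 3 ≤ N)
    (hcard : Fintype.card W = N) (f : ZMod N → W) (hb : Function.Bijective f)
    (ha : ∀ k, Gr.Adj (f k) (f (k+1))) (v : W) (hv : f 0 = v) :
    ∃ w : Gr.Walk v v, w.IsHamiltonianCycle ∧
      (∀ e, e ∈ w.edges ↔ ∃ k : ZMod N, e = s(f k, f (k+1))) := by
  haveI : NeZero N := ⟨by omega⟩
  have hcast : ∀ j j' : ℕ, j < N → j' < N → ((j : ℕ) : ZMod N) = ↑j' → j = j' := by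
    intro j j' h1 h2 he
    rw [ZMod.natCast_eq_natCast_iff'] at he
    rwa [Nat.mod_eq_of_lt h1, Nat.mod_eq_of_lt h2] at he
  have h0 : f ↑(N - N) = v := by rw [Nat.sub_self, Nat.cast_zero, hv]
  have hNN : f ↑N = v := by rw [ZMod.natCast_self, hv]
  have hsup : ((cycWalk Gr f ha N le_rfl).copy h0 hNN).support =
      (List.range (N+1)).map (fun j : ℕ => f (j : ZMod N)) := by
    rw [SimpleGraph.Walk.support_copy, cycWalk_support]
    apply List.map_congr_left
    intro x hx
    rw [show N - N + x = x from by omega]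
  have hedg : ((cycWalk Gr f ha N le_rfl).copy h0 hNN).edges =
      (List.range N).map (fun j : ℕ => s(f (j : ZMod N), f ((j+1 : ℕ) : ZMod N))) := by
    rw [SimpleGraph.Walk.edges_copy, cycWalk_edges]
    apply List.map_congr_left
    intro x hx
    rw [show N - N + x = x from by omega]
  refine ⟨(cycWalk Gr f ha N le_rfl).copy h0 hNN, ?_, ?_⟩
  · have hlen : ((cycWalk Gr f ha N le_rfl).copy h0 hNN).length = N := by
      rw [← SimpleGraph.Walk.length_edges, hedg, List.length_map, List.length_range]
    have hnotnil : ¬ ((cycWalk Gr f ha N le_rfl).copy h0 hNN).Nil := by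
      rw [SimpleGraph.Walk.nil_iff_length_eq, hlen]
      omega
    have htail : ((cycWalk Gr f ha N le_rfl).copy h0 hNN).support.tail =
        (List.range N).map (fun j : ℕ => f ((j+1 : ℕ) : ZMod N)) := by
      rw [hsup, List.range_succ_eq_map, List.map_cons, List.tail_cons, List.map_map]
      rfl
    have hmap_nodup : ((List.range N).map (fun j : ℕ => f ↑(j+1))).Nodup := by
      refine List.Nodup.map_on ?_ (List.nodup_range (n := N))
      intro x hx y hy hf
      rw [List.mem_range] at hx hy
      have hh := hb.1 hf
      rw [ZMod.natCast_eq_natCast_iff'] at hh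
      exact succ_mod_inj hx hy hh
    have htail_nodup : ((cycWalk Gr f ha N le_rfl).copy h0 hNN).support.tail.Nodup := by
      rw [htail]; exact hmap_nodup
    have hedges_nodup : ((cycWalk Gr f ha N le_rfl).copy h0 hNN).edges.Nodup := by
      rw [hedg]
      refine List.Nodup.map_on ?_ (List.nodup_range (n := N))
      intro x hx y hy hf
      rw [List.mem_range] at hx hy
      rw [Sym2.eq_iff] at hf
      rcases hf with ⟨e1, e2⟩ | ⟨e1, e2⟩
      · exact hcast x y hx hy (hb.1 e1)
      · exfalso
        have c1 := hb.1 e1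
        have c2 := hb.1 e2
        have hc20 : ((2:ℕ) : ZMod N) = 0 := by
          have hx2 : ((x:ℕ) : ZMod N) + 2 = ((x : ℕ) : ZMod N) := by
            push_cast at c1 c2 ⊢
            rw [c1] at c2 ⊢
            linear_combination c2
          have h2 := add_left_cancel (a := ((x:ℕ) : ZMod N)) (b := ((2:ℕ) : ZMod N)) (c := 0)
            (by rw [add_zero]; push_cast; exact hx2)
          exact h2
        rw [ZMod.natCast_eq_zero_iff] at hc20
        have := Nat.le_of_dvd (by norm_num) hc20
        omega
    have hne_nil : (cycWalk Gr f ha N le_rfl).copy h0 hNN ≠ SimpleGraph.Walk.nil := by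
      intro h
      rw [h] at hlen
      simp at hlen
      omega
    refine ⟨⟨⟨⟨hedges_nodup⟩, hne_nil⟩, htail_nodup⟩, ?_⟩
    intro x
    rw [SimpleGraph.Walk.support_tail_of_not_nil _ hnotnil, htail]
    refine List.count_eq_one_of_mem hmap_nodup ?_
    obtain ⟨k, rfl⟩ := hb.2 x
    rcases Nat.eq_zero_or_pos k.val with h1 | h1
    · refine List.mem_map.mpr ⟨N - 1, by rw [List.mem_range]; omega, ?_⟩
      congr 1
      rw [show N - 1 + 1 = N by omega, ZMod.natCast_self]
      exact ((ZMod.val_eq_zero _).mp h1).symm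
    · refine List.mem_map.mpr ⟨k.val - 1, by rw [List.mem_range]; have := ZMod.val_lt k; omega, ?_⟩
      congr 1
      rw [show k.val - 1 + 1 = k.val by omega]
      exact ZMod.natCast_rightInverse k
  · intro e
    rw [hedg, List.mem_map]
    constructor
    · rintro ⟨j, hj, rfl⟩
      exact ⟨↑j, by rw [Nat.cast_add, Nat.cast_one]⟩
    · rintro ⟨k, rfl⟩
      refine ⟨k.val, by rw [List.mem_range]; exact ZMod.val_lt k, ?_⟩
      rw [Nat.cast_add, Nat.cast_one, ZMod.natCast_rightInverse k]

end EDHC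

namespace EDHC

lemma good_all : ∀ (n : ℕ) (hn : 4 ≤ n), Good n ⟨n-2, Nat.sub_lt (by omega) (by norm_num)⟩ ⟨n-1, Nat.sub_lt (by omega) (by norm_num)⟩ := by
  intro n
  induction n with
  | zero => intro h; omega
  | succ n ih =>
      intro h
      rcases Nat.lt_or_ge n 4 with h4 | h4
      · have hn3 : n = 3 := by omega
        subst hn3
        convert good4 using 2 <;> decide
      · have hg := good_step (n := n) (by omega) ⟨n-2, by omega⟩ ⟨n-1, by omega⟩
          (by intro hh; rw [Fin.mk.injEq] at hh; omega) (ih h4)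
        convert hg using 2 <;> (simp [Fin.coe_castSucc, Fin.val_last]; try omega)

end EDHC

/-- For `n ≥ 4`, `Q_n` contains two edge-disjoint Hamiltonian cycles `C₁`, `C₂`
with `(0, aₙ)` an edge of `C₁` and `(aₙ, aₙ₋₁ + aₙ)` an edge of `C₂`. -/
theorem hypercube_EDHC_through_edges (n : ℕ) (hn : 4 ≤ n) :
    ∃ (c₁ : (cubeCayley n).Walk 0 0)
      (c₂ : (cubeCayley n).Walk (Pi.single (⟨n - 1, by omega⟩ : Fin n) (1 : ZMod 2))
        (Pi.single (⟨n - 1, by omega⟩ : Fin n) (1 : ZMod 2))),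
      c₁.IsHamiltonianCycle ∧ c₂.IsHamiltonianCycle ∧
      (∀ e, e ∈ c₁.edges → e ∉ c₂.edges) ∧
      s((0 : Fin n → ZMod 2), Pi.single (⟨n - 1, by omega⟩ : Fin n) (1 : ZMod 2)) ∈ c₁.edges ∧
      s(Pi.single (⟨n - 1, by omega⟩ : Fin n) (1 : ZMod 2),
        Pi.single (⟨n - 2, by omega⟩ : Fin n) (1 : ZMod 2) +
          Pi.single (⟨n - 1, by omega⟩ : Fin n) (1 : ZMod 2)) ∈ c₂.edges := by
  classical
  obtain ⟨f, g, hfb, hgb, hfa, hga, hdisj, hf0, hf1, hf2, hg0, hg1, hg2⟩ := EDHC.good_all n hn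
  have hN3 : 3 ≤ 2^n := by
    calc (3:ℕ) ≤ 2^2 := by norm_num
    _ ≤ 2^n := Nat.pow_le_pow_right (by norm_num) (by omega)
  have hcard : Fintype.card (Fin n → ZMod 2) = 2^n := by
    rw [Fintype.card_fun, ZMod.card, Fintype.card_fin]
  have hf₁b : Function.Bijective (fun k : ZMod (2^n) => f (k+1)) :=
    hfb.comp (Equiv.addRight (1 : ZMod (2^n))).bijective
  have hf₁a : ∀ k, (cubeCayley n).Adj (f (k+1)) (f (k+1+1)) := fun k => hfa (k+1)
  obtain ⟨c₁, hc₁ham, hc₁edges⟩ := EDHC.cyc_to_hamcycle (cubeCayley n) hN3 hcard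
    (fun k => f (k+1)) hf₁b hf₁a 0 (by show f (0+1) = 0; rw [zero_add, hf1])
  obtain ⟨c₂, hc₂ham, hc₂edges⟩ := EDHC.cyc_to_hamcycle (cubeCayley n) hN3 hcard
    g hgb hga _ hg0
  refine ⟨c₁, c₂, hc₁ham, hc₂ham, ?_, ?_, ?_⟩
  · intro e he1 he2
    obtain ⟨k, rfl⟩ := (hc₁edges e).mp he1
    obtain ⟨l, he⟩ := (hc₂edges _).mp he2
    exact hdisj (k+1) l he
  · refine (hc₁edges _).mpr ⟨-1, ?_⟩
    show s((0 : Fin n → ZMod 2), _) = s(f (-1+1), f (-1+1+1))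
    rw [neg_add_cancel, zero_add, hf0, hf1]
    exact Sym2.eq_swap
  · refine (hc₂edges _).mpr ⟨0, ?_⟩
    refine Sym2.eq_iff.mpr (Or.inl ⟨hg0.symm, ?_⟩)
    rw [zero_add, hg1]
    exact add_comm _ _
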